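/- (Rank-one perturbation inequality for resolvent traces.) Let B be a p×p Hermitian positive semidefinite complex matrix, s ∈ ℂ^p, and σ > 0. Then 0 ≤ tr (B + σI)⁻¹ − tr (B + s s* + σI)⁻¹ ≤ 1/σ. -/

import Mathlib

open Matrix
open scoped ComplexOrder

section aux

variable {m n o : Type*} [Fintype m] [Fintype n] [Fintype o]

lemma myMulVecMulVec (M : Matrix m n ℂ) (u : n → ℂ) (v : o → ℂ) :
    M * vecMulVec u v = vecMulVec (M *ᵥ u) v := by
  ext i j
  simp only [Matrix.mul_apply, vecMulVec_apply, mulVec, dotProduct, Finset.sum_mul]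
  exact Finset.sum_congr rfl fun k _ => (mul_assoc _ _ _).symm

lemma myVecMulVecMul (u : m → ℂ) (v : n → ℂ) (M : Matrix n o ℂ) :
    vecMulVec u v * M = vecMulVec u (v ᵥ* M) := by
  ext i j
  simp only [Matrix.mul_apply, vecMulVec_apply, vecMul, dotProduct, Finset.mul_sum]
  exact Finset.sum_congr rfl fun k _ => (mul_assoc _ _ _)

lemma myVecMulVecMulVecMulVec (u : m → ℂ) (v w : n → ℂ) (x : o → ℂ) :
    vecMulVec u v * vecMulVec w x = (v ⬝ᵥ w) • vecMulVec u x := by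
  ext i j
  simp only [Matrix.mul_apply, vecMulVec_apply, Matrix.smul_apply, dotProduct,
    Finset.sum_mul, Finset.mul_sum, smul_eq_mul]
  exact Finset.sum_congr rfl fun k _ => by ring

lemma myTraceVecMulVec (u v : m → ℂ) : (vecMulVec u v).trace = u ⬝ᵥ v := by
  simp [Matrix.trace, vecMulVec_apply, dotProduct, Matrix.diag]

end aux

/-- Rank-one perturbation inequality for resolvent traces:
`0 ≤ tr (B + σI)⁻¹ − tr (B + s s* + σI)⁻¹ ≤ 1/σ`. -/
theorem resolvent_trace_rank_one_perturbation
    (p : ℕ) (B : Matrix (Fin p) (Fin p) ℂ) (hB : B.PosSemidef)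
    (s : Fin p → ℂ) (σ : ℝ) (hσ : 0 < σ) :
    0 ≤ ((B + (σ : ℂ) • 1)⁻¹.trace
          - (B + vecMulVec s (star s) + (σ : ℂ) • 1)⁻¹.trace).re ∧
    ((B + (σ : ℂ) • 1)⁻¹.trace
          - (B + vecMulVec s (star s) + (σ : ℂ) • 1)⁻¹.trace).re ≤ 1 / σ ∧
    ((B + (σ : ℂ) • 1)⁻¹.trace
          - (B + vecMulVec s (star s) + (σ : ℂ) • 1)⁻¹.trace).im = 0 := by
  set A : Matrix (Fin p) (Fin p) ℂ := B + (σ : ℂ) • 1 with hAdef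
  have hσ1 : ((σ : ℂ) • 1 : Matrix (Fin p) (Fin p) ℂ).PosDef := by
    refine Matrix.posDef_iff_dotProduct_mulVec.mpr ⟨?_, fun x hx => ?_⟩
    · unfold Matrix.IsHermitian
      rw [conjTranspose_smul, conjTranspose_one]
      simp [Complex.ext_iff]
    · have hx' : 0 < star x ⬝ᵥ x := by
        rcases dotProduct_star_self_nonneg x |>.lt_or_eq with h | h
        · exact h
        · exact absurd (dotProduct_star_self_eq_zero.mp h.symm) hx
      rw [smul_mulVec, one_mulVec, dotProduct_smul]
      have : ((σ : ℂ)) • (star x ⬝ᵥ x) = (σ : ℂ) * (star x ⬝ᵥ x) := rfl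
      rw [this]
      exact mul_pos (Complex.zero_lt_real.mpr hσ) hx'
  have hA : A.PosDef := Matrix.PosDef.posSemidef_add hB hσ1
  have hdet : IsUnit A.det := isUnit_iff_isUnit_det A |>.mp hA.isUnit
  have hAAinv : A * A⁻¹ = 1 := Matrix.mul_nonsing_inv A hdet
  set y : Fin p → ℂ := A⁻¹ *ᵥ s with hydef
  have hs : A *ᵥ y = s := by
    rw [hydef, Matrix.mulVec_mulVec, hAAinv, Matrix.one_mulVec]
  have hstary : star s ᵥ* A⁻¹ = star y := by
    rw [hydef, Matrix.star_mulVec, hA.isHermitian.inv]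
  set q : ℂ := star s ⬝ᵥ y with hqdef
  set b : ℂ := star y ⬝ᵥ (B *ᵥ y) with hbdef
  set nn : ℂ := star y ⬝ᵥ y with hndef
  have hb : 0 ≤ b := hB.dotProduct_mulVec_nonneg y
  have hn : 0 ≤ nn := dotProduct_star_self_nonneg y
  have hq : q = b + (σ : ℂ) * nn := by
    rw [hqdef, ← hs, Matrix.star_mulVec, hA.isHermitian, ← Matrix.dotProduct_mulVec,
      hAdef, Matrix.add_mulVec, dotProduct_add, smul_mulVec, one_mulVec,
      dotProduct_smul, smul_eq_mul]
  set c : ℂ := 1 + q with hcdef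
  have hq0 : 0 ≤ q := hq ▸ add_nonneg hb (mul_nonneg (by positivity) hn)
  have hc0 : c ≠ 0 := by
    have : (0 : ℂ) < c := hcdef ▸ lt_add_of_lt_of_nonneg one_pos hq0
    exact this.ne'
  have key : (A + vecMulVec s (star s)) * (A⁻¹ - c⁻¹ • vecMulVec y (star y)) = 1 := by
    rw [add_mul, mul_sub, mul_sub, hAAinv, Matrix.mul_smul, Matrix.mul_smul,
      myMulVecMulVec, hs, myVecMulVecMul, hstary, myVecMulVecMulVecMulVec, ← hqdef,
      smul_smul]
    have hcoef : c⁻¹ + c⁻¹ * q = 1 := by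
      field_simp [hcdef]
      exact hcdef.symm
    calc 1 - c⁻¹ • vecMulVec s (star y) +
          (vecMulVec s (star y) - (c⁻¹ * q) • vecMulVec s (star y))
        = 1 + (1 - (c⁻¹ + c⁻¹ * q)) • vecMulVec s (star y) := by
          module
      _ = 1 := by rw [hcoef, sub_self, zero_smul, add_zero]
  have hinv : (A + vecMulVec s (star s))⁻¹ = A⁻¹ - c⁻¹ • vecMulVec y (star y) :=
    Matrix.inv_eq_right_inv key
  have hrearr : B + vecMulVec s (star s) + (σ : ℂ) • 1 = A + vecMulVec s (star s) := by
    rw [hAdef]; abel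
  have htr : A⁻¹.trace - (B + vecMulVec s (star s) + (σ : ℂ) • 1)⁻¹.trace = c⁻¹ * nn := by
    rw [hrearr, hinv, Matrix.trace_sub, Matrix.trace_smul, myTraceVecMulVec,
      dotProduct_comm, ← hndef]
    simp [smul_eq_mul]
  obtain ⟨hbr, hbi⟩ := Complex.nonneg_iff.mp hb
  obtain ⟨hnr, hni⟩ := Complex.nonneg_iff.mp hn
  have hbre : b = ((b.re : ℝ) : ℂ) := Complex.ext rfl hbi.symm
  have hnre : nn = ((nn.re : ℝ) : ℂ) := Complex.ext rfl hni.symm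
  set R : ℝ := 1 + b.re + σ * nn.re with hRdef
  have hR : 0 < R := by positivity
  have hcR : c = ((R : ℝ) : ℂ) := by
    rw [hcdef, hq, hbre, hnre, hRdef]
    push_cast
    ring
  have hval : c⁻¹ * nn = ((R⁻¹ * nn.re : ℝ) : ℂ) := by
    conv_lhs => rw [hnre, hcR]
    push_cast
    ring
  rw [htr, hval]
  refine ⟨?_, ?_, ?_⟩
  · rw [Complex.ofReal_re]; positivity
  · rw [Complex.ofReal_re]
    rw [inv_mul_eq_div, div_le_div_iff₀ hR hσ]
    nlinarith [hbr, hnr]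
  · exact Complex.ofReal_im _
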